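/- arXiv:1912.09574 — 7 statements merged into one kernel-verified Lean document; each statement's English description precedes it below -/
import Mathlib

section
/- Define Ψ(λ) = [(μ_P+η) - λ]·[-(β_P-μ_P-γ) - λ]/(β_P γ) on the interval (0, min(μ_P+η, -(β_P-μ_P-γ))). Under the assumptions β_P, μ_P, η, γ > 0, β_P > μ_P, β_P < μ_P + η, and (β_P-μ_P-γ)(μ_P+η) + β_P γ < 0, the function Ψ is strictly decreasing on this interval, Ψ(0) > 1, and there exists a unique λ* in this interval with Ψ(λ*) = 1. -/
theorem Psi_strictAnti_and_unique_root (βP μP η γ : ℝ)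
    (hβP : 0 < βP) (hμP : 0 < μP) (hη : 0 < η) (hγ : 0 < γ)
    (h1 : 0 < βP - μP) (h2 : βP - μP - η < 0)
    (hext : (βP - μP - γ) * (μP + η) + βP * γ < 0) :
    StrictAntiOn (fun lam : ℝ => (μP + η - lam) * (μP + γ - βP - lam) / (βP * γ))
      (Set.Ioo 0 (min (μP + η) (μP + γ - βP))) ∧
    1 < (μP + η - 0) * (μP + γ - βP - 0) / (βP * γ) ∧
    ∃! lam : ℝ, lam ∈ Set.Ioo 0 (min (μP + η) (μP + γ - βP)) ∧
      (μP + η - lam) * (μP + γ - βP - lam) / (βP * γ) = 1 := by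
  set f : ℝ → ℝ := fun lam => (μP + η - lam) * (μP + γ - βP - lam) / (βP * γ) with hf
  have ha : 0 < μP + η := by linarith
  have hd : 0 < βP * γ := mul_pos hβP hγ
  have hb : 0 < μP + γ - βP := by nlinarith
  set m := min (μP + η) (μP + γ - βP) with hm
  have hm0 : 0 < m := lt_min ha hb
  have hanti : StrictAntiOn f (Set.Ioo 0 m) := by
    intro x hx y hy hxy
    have hya : y < μP + η := lt_of_lt_of_le hy.2 (min_le_left _ _)
    have hyb : y < μP + γ - βP := lt_of_lt_of_le hy.2 (min_le_right _ _)
    have key : (μP + η - y) * (μP + γ - βP - y) < (μP + η - x) * (μP + γ - βP - x) := by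
      nlinarith [hx.1, hy.1]
    exact div_lt_div_of_pos_right key hd
  have hf0 : 1 < f 0 := by
    rw [hf]
    rw [lt_div_iff₀ hd]
    nlinarith
  have hfm : f m = 0 := by
    rcases min_choice (μP + η) (μP + γ - βP) with h | h
    · simp [hf, hm, h]
    · simp [hf, hm, h]
  refine ⟨hanti, by simp only [sub_zero]; rw [hf] at hf0; simpa using hf0, ?_⟩
  have hcont : Continuous f := by
    apply Continuous.div_const
    exact ((continuous_const.sub continuous_id).mul (continuous_const.sub continuous_id))
  have hmem : (1 : ℝ) ∈ Set.Ioo (f m) (f 0) := by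
    rw [hfm]; exact ⟨one_pos, hf0⟩
  obtain ⟨lam, hlam, hflam⟩ := intermediate_value_Ioo' hm0.le hcont.continuousOn hmem
  refine ⟨lam, ⟨hlam, hflam⟩, ?_⟩
  rintro y ⟨hy, hfy⟩
  exact hanti.injOn hy hlam (hfy.trans hflam.symm)
end

section
/- Under the standing assumptions, the system N' = (β_N-μ_N)N - δN² - κNP_S, P_S' = -(μ_P+η)P_S - ρκNP_S + γP_H, P_H' = -μ_P P_H + ρκNP_S - γP_H + β_P(P_S+P_H) has an equilibrium (N*, P_S*, P_H*) with all coordinates strictly positive if and only if (β_N-μ_N)(β_P-μ_P)κρ + δ(β_P-μ_P)(μ_P+η) > -δγ(β_P-μ_P-η), and in that case this positive equilibrium is unique, with N* = [-(β_P-μ_P)(μ_P+η) - γ(β_P-μ_P-η)]/[(β_P-μ_P)κρ], P_S* = ((β_N-μ_N) - δN*)/κ, and P_H* = -((β_P-μ_P-η)/(β_P-μ_P))P_S*. -/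
theorem interior_equilibrium_exists_iff (βN μN δ κ ρ γ βP μP η Nstar : ℝ)
    (hβN : 0 < βN) (hμN : 0 < μN) (hδ : 0 < δ) (hκ : 0 < κ) (hρ : 0 < ρ)
    (hγ : 0 < γ) (hβP : 0 < βP) (hμP : 0 < μP) (hη : 0 < η)
    (hN : μN < βN) (hP : μP < βP) (hPη : βP < μP + η)
    (hext : (βP - μP - γ) * (μP + η) + βP * γ < 0)
    (hNstar : Nstar = (-((βP - μP) * (μP + η)) - γ * (βP - μP - η)) / ((βP - μP) * κ * ρ)) :
    ((∃ N PS PH : ℝ, 0 < N ∧ 0 < PS ∧ 0 < PH ∧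
        (βN - μN) * N - δ * N ^ 2 - κ * N * PS = 0 ∧
        -(μP + η) * PS - ρ * κ * N * PS + γ * PH = 0 ∧
        -μP * PH + ρ * κ * N * PS - γ * PH + βP * (PS + PH) = 0) ↔
      (βN - μN) * (βP - μP) * κ * ρ + δ * (βP - μP) * (μP + η) > -(δ * γ * (βP - μP - η))) ∧
    (∀ N PS PH : ℝ, 0 < N → 0 < PS → 0 < PH →
      (βN - μN) * N - δ * N ^ 2 - κ * N * PS = 0 →
      -(μP + η) * PS - ρ * κ * N * PS + γ * PH = 0 →
      -μP * PH + ρ * κ * N * PS - γ * PH + βP * (PS + PH) = 0 →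
      N = Nstar ∧ PS = ((βN - μN) - δ * Nstar) / κ ∧
        PH = -((βP - μP - η) / (βP - μP)) * (((βN - μN) - δ * Nstar) / κ)) := by
  have hPμ : 0 < βP - μP := by linarith
  have hPμ' : (βP - μP) ≠ 0 := ne_of_gt hPμ
  have hden : 0 < (βP - μP) * κ * ρ := by positivity
  have hnum : 0 < -((βP - μP) * (μP + η)) - γ * (βP - μP - η) := by nlinarith [hext]
  have hκ' : κ ≠ 0 := ne_of_gt hκ
  have hρ' : ρ ≠ 0 := ne_of_gt hρ
  have hNs0 : 0 < Nstar := by rw [hNstar]; exact div_pos hnum hden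
  -- uniqueness part
  have uniq : ∀ N PS PH : ℝ, 0 < N → 0 < PS → 0 < PH →
      (βN - μN) * N - δ * N ^ 2 - κ * N * PS = 0 →
      -(μP + η) * PS - ρ * κ * N * PS + γ * PH = 0 →
      -μP * PH + ρ * κ * N * PS - γ * PH + βP * (PS + PH) = 0 →
      N = Nstar ∧ PS = ((βN - μN) - δ * Nstar) / κ ∧
        PH = -((βP - μP - η) / (βP - μP)) * (((βN - μN) - δ * Nstar) / κ) := by
    intro N PS PH hN0 hPS0 hPH0 e1 e2 e3
    have hsum : (βP - μP - η) * PS + (βP - μP) * PH = 0 := by linear_combination e2 + e3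
    have key : ((-((βP - μP) * (μP + η)) - γ * (βP - μP - η)) - (βP - μP) * κ * ρ * N) * PS = 0 := by
      linear_combination (βP - μP) * e2 - γ * hsum
    have hfac : (-((βP - μP) * (μP + η)) - γ * (βP - μP - η)) - (βP - μP) * κ * ρ * N = 0 := by
      rcases mul_eq_zero.mp key with h | h
      · exact h
      · exact absurd h (ne_of_gt hPS0)
    have hNeq : N = Nstar := by
      rw [hNstar, eq_div_iff (ne_of_gt hden)]; linarith
    have e1' : (βN - μN) - δ * N - κ * PS = 0 := by
      have h : N * ((βN - μN) - δ * N - κ * PS) = 0 := by linear_combination e1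
      rcases mul_eq_zero.mp h with h' | h'
      · exact absurd h' (ne_of_gt hN0)
      · exact h'
    have hPSeq : PS = ((βN - μN) - δ * Nstar) / κ := by
      rw [eq_div_iff hκ', ← hNeq]; linarith
    refine ⟨hNeq, hPSeq, ?_⟩
    rw [← hPSeq]
    field_simp
    linarith [hsum]
  constructor
  · constructor
    · rintro ⟨N, PS, PH, hN0, hPS0, hPH0, e1, e2, e3⟩
      obtain ⟨hNeq, hPSeq, -⟩ := uniq N PS PH hN0 hPS0 hPH0 e1 e2 e3
      have hPS' : 0 < ((βN - μN) - δ * Nstar) / κ := hPSeq ▸ hPS0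
      have h2 : δ * Nstar < βN - μN := by
        have := (div_pos_iff.mp hPS')
        rcases this with ⟨h, -⟩ | ⟨-, h⟩
        · linarith
        · exact absurd h (not_lt.mpr hκ.le)
      rw [hNstar] at h2
      rw [mul_div_assoc'] at h2
      have h3 := (div_lt_iff₀ hden).mp h2
      nlinarith [h3]
    · intro hcond
      have h3 : δ * (-((βP - μP) * (μP + η)) - γ * (βP - μP - η)) < (βN - μN) * ((βP - μP) * κ * ρ) := by
        nlinarith [hcond]
      have h2 : δ * Nstar < βN - μN := by
        rw [hNstar, mul_div_assoc']
        exact (div_lt_iff₀ hden).mpr h3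
      set PS := ((βN - μN) - δ * Nstar) / κ with hPS
      have hPS0 : 0 < PS := div_pos (by linarith) hκ
      set PH := -((βP - μP - η) / (βP - μP)) * PS with hPH
      have hPH0 : 0 < PH := by
        apply mul_pos _ hPS0
        rw [neg_div' ]
        exact div_pos (by linarith) hPμ
      refine ⟨Nstar, PS, PH, hNs0, hPS0, hPH0, ?_, ?_, ?_⟩
      · rw [hPS]; field_simp; ring
      · rw [hPH, hPS, hNstar]; field_simp; ring
      · rw [hPH, hPS, hNstar]; field_simp; ring
  · exact uniq
end

section
/- Let N̂ = (β_N - μ_N)/δ. The Jacobian of system (1.1) at E₂ = (N̂, 0, 0) has eigenvalue -(β_N - μ_N) < 0 and two further eigenvalues given by the roots of λ² + aλ + b = 0 with a = (μ_P + η + ρκN̂) - (β_P - μ_P - γ) > 0 and b = (μ_P + γ - β_P)(μ_P + η + ρκN̂) - γ(ρκN̂ + β_P). Hence E₂ is locally asymptotically stable (all eigenvalues have negative real part) if and only if b > 0, which is equivalent to (β_N - μ_N)(β_P - μ_P)κρ + δ(β_P - μ_P)(μ_P + η) < -δγ(β_P - μ_P - η). -/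
open Polynomial

private lemma charpoly_aux (p q r s u v : ℝ) :
    Matrix.charpoly (!![p, q, 0; 0, r, s; 0, u, v] : Matrix (Fin 3) (Fin 3) ℝ)
    = (X + C (-p)) * (X ^ 2 + C (-(r + v)) * X + C (r * v - s * u)) := by
  rw [Matrix.charpoly, Matrix.det_fin_three]
  simp [Matrix.charmatrix_apply, Matrix.vecHead, Matrix.vecTail]
  ring

private lemma quad_aux (c a b : ℝ) (hc : 0 < c) (ha : 0 < a) :
    ((∀ z : ℂ,
      (((X + C c) * (X ^ 2 + C a * X + C b)).map (Complex.ofRealHom : ℝ →+* ℂ)).IsRoot z →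
        z.re < 0) ↔ 0 < b) := by
  have hmap : ((X + C c) * (X ^ 2 + C a * X + C b)).map (Complex.ofRealHom : ℝ →+* ℂ)
      = (X + C ((c : ℝ) : ℂ)) * (X ^ 2 + C ((a : ℝ) : ℂ) * X + C ((b : ℝ) : ℂ)) := by
    simp [Polynomial.map_mul, Polynomial.map_add, Polynomial.map_pow]
  rw [hmap]
  constructor
  · intro hall
    by_contra hb
    push_neg at hb
    set s := Real.sqrt (a ^ 2 - 4 * b) with hs
    have hdisc : 0 ≤ a ^ 2 - 4 * b := by nlinarith
    have hs2 : s ^ 2 = a ^ 2 - 4 * b := Real.sq_sqrt hdisc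
    have hsnn : 0 ≤ s := Real.sqrt_nonneg _
    have hsa : a ≤ s := by nlinarith
    set x := (-a + s) / 2 with hx
    have hxnn : 0 ≤ x := by rw [hx]; linarith
    have hroot : x ^ 2 + a * x + b = 0 := by
      have : x ^ 2 + a * x + b = (s ^ 2 - (a ^ 2 - 4 * b)) / 4 := by rw [hx]; ring
      rw [this, hs2]; ring
    have hfac : ((x : ℝ) : ℂ) ^ 2 + ((a : ℝ) : ℂ) * ((x : ℝ) : ℂ) + ((b : ℝ) : ℂ) = 0 := by
      exact_mod_cast congrArg (Complex.ofReal) hroot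
    have := hall ((x : ℝ) : ℂ) (by
      rw [Polynomial.IsRoot]
      simp only [Polynomial.eval_mul, Polynomial.eval_add, Polynomial.eval_pow,
        Polynomial.eval_C, Polynomial.eval_X]
      rw [hfac, mul_zero])
    rw [Complex.ofReal_re] at this
    linarith
  · intro hb z hz
    rw [Polynomial.IsRoot] at hz
    simp only [Polynomial.eval_mul, Polynomial.eval_add, Polynomial.eval_pow,
      Polynomial.eval_C, Polynomial.eval_X, mul_eq_zero] at hz
    rcases hz with hz | hz
    · have : z = -((c : ℝ) : ℂ) := by linear_combination hz
      rw [this]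
      simp only [Complex.neg_re, Complex.ofReal_re]
      linarith
    · have h1 := congrArg Complex.re hz
      have h2 := congrArg Complex.im hz
      simp only [Complex.add_re, Complex.add_im, Complex.mul_re, Complex.mul_im, pow_two,
        Complex.ofReal_re, Complex.ofReal_im, Complex.zero_re, Complex.zero_im] at h1 h2
      by_contra hre
      push_neg at hre
      have him : z.im = 0 := by
        rcases mul_eq_zero.mp (show z.im * (2 * z.re + a) = 0 by nlinarith) with h | h
        · exact h
        · exfalso; nlinarith
      rw [him] at h1
      nlinarith

theorem E2_stability_criterion (βN μN δ κ ρ γ βP μP η : ℝ)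
    (hβN : 0 < βN) (hμN : 0 < μN) (hδ : 0 < δ) (hκ : 0 < κ) (hρ : 0 < ρ)
    (hγ : 0 < γ) (hβP : 0 < βP) (hμP : 0 < μP) (hη : 0 < η)
    (hN : μN < βN) (hP : μP < βP) (hPη : βP < μP + η)
    (hext : (βP - μP - γ) * (μP + η) + βP * γ < 0) :
    let Nhat := (βN - μN) / δ
    let J : Matrix (Fin 3) (Fin 3) ℝ :=
      !![-(βN - μN), -(κ * Nhat), 0;
         0, -(μP + η) - ρ * κ * Nhat, γ;
         0, ρ * κ * Nhat + βP, βP - μP - γ]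
    let a := (μP + η + ρ * κ * Nhat) - (βP - μP - γ)
    let b := (μP + γ - βP) * (μP + η + ρ * κ * Nhat) - γ * (ρ * κ * Nhat + βP)
    Matrix.charpoly J = (X + C (βN - μN)) * (X ^ 2 + C a * X + C b) ∧
    (Matrix.charpoly J).IsRoot (-(βN - μN)) ∧ -(βN - μN) < 0 ∧
    0 < a ∧
    ((∀ z : ℂ, (Matrix.charpoly (J.map (Complex.ofReal))).IsRoot z → z.re < 0) ↔ 0 < b) ∧
    (0 < b ↔
      (βN - μN) * (βP - μP) * κ * ρ + δ * (βP - μP) * (μP + η) < -(δ * γ * (βP - μP - η))) := by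
  intro Nhat J a b
  have hNhat : 0 < Nhat := div_pos (by linarith) hδ
  have hρκ : 0 < ρ * κ * Nhat := by positivity
  have ha : (0:ℝ) < a := by
    show (0:ℝ) < (μP + η + ρ * κ * Nhat) - (βP - μP - γ)
    linarith
  have hc : (0:ℝ) < βN - μN := by linarith
  have hchar : Matrix.charpoly J = (X + C (βN - μN)) * (X ^ 2 + C a * X + C b) := by
    have h0 := charpoly_aux (-(βN - μN)) (-(κ * Nhat)) (-(μP + η) - ρ * κ * Nhat) γ
      (ρ * κ * Nhat + βP) (βP - μP - γ)
    rw [show (- -(βN - μN)) = βN - μN by ring,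
      show (-((-(μP + η) - ρ * κ * Nhat) + (βP - μP - γ))) = a from by
        show _ = (μP + η + ρ * κ * Nhat) - (βP - μP - γ); ring,
      show ((-(μP + η) - ρ * κ * Nhat) * (βP - μP - γ) - γ * (ρ * κ * Nhat + βP)) = b from by
        show _ = (μP + γ - βP) * (μP + η + ρ * κ * Nhat) - γ * (ρ * κ * Nhat + βP); ring] at h0
    exact h0
  refine ⟨hchar, ?_, by linarith, ha, ?_, ?_⟩
  · rw [hchar]
    simp [Polynomial.IsRoot]
  · have hcoe : (Complex.ofReal : ℝ → ℂ) = ⇑(Complex.ofRealHom : ℝ →+* ℂ) := rfl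
    have hmapchar : Matrix.charpoly (J.map (Complex.ofReal))
        = (Matrix.charpoly J).map (Complex.ofRealHom : ℝ →+* ℂ) := by
      rw [hcoe]
      exact Matrix.charpoly_map J (Complex.ofRealHom : ℝ →+* ℂ)
    rw [hmapchar, hchar]
    exact quad_aux (βN - μN) a b hc ha
  · have hb' : b = (μP + γ - βP) * (μP + η + ρ * κ * Nhat) - γ * (ρ * κ * Nhat + βP) := rfl
    have hNhat' : Nhat = (βN - μN) / δ := rfl
    have hδne : δ ≠ 0 := ne_of_gt hδ
    have key : b * δ = -((βN - μN) * (βP - μP) * κ * ρ + δ * (βP - μP) * (μP + η)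
        + δ * γ * (βP - μP - η)) := by
      rw [hb', hNhat']
      field_simp
      ring
    constructor
    · intro hb
      nlinarith [mul_pos hb hδ]
    · intro h
      by_contra hb
      push_neg at hb
      nlinarith [mul_nonneg (neg_nonneg.2 hb) hδ.le]
end

section
/- Under the assumptions μ_P + γ - β_P > 0, μ_P + η > β_P, β_P > 0, ρ, κ, N̂ > 0 and (μ_P + η + ρκN̂)(μ_P + γ - β_P) > γ(β_P + ρκN̂), there exist constants c₁ > 0 and c₂ > 0 with c₂ = c₁ + 1/ρ such that -c₁(μ_P+η) - c₁ρκN̂ + c₂ρκN̂ + c₂β_P < 0 and -c₂μ_P + c₁γ - c₂γ + c₂β_P < 0. -/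
theorem lyapunov_coefficients_exist (μP η γ βP ρ κ Nhat : ℝ)
    (hμP : 0 < μP) (hη : 0 < η) (hγ : 0 < γ) (hβP : 0 < βP)
    (hρ : 0 < ρ) (hκ : 0 < κ) (hNhat : 0 < Nhat)
    (h1 : 0 < μP + γ - βP) (h2 : βP < μP + η)
    (hstab : γ * (βP + ρ * κ * Nhat) < (μP + η + ρ * κ * Nhat) * (μP + γ - βP)) :
    ∃ c1 c2 : ℝ, 0 < c1 ∧ 0 < c2 ∧ c2 = c1 + 1 / ρ ∧
      -c1 * (μP + η) - c1 * ρ * κ * Nhat + c2 * ρ * κ * Nhat + c2 * βP < 0 ∧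
      -c2 * μP + c1 * γ - c2 * γ + c2 * βP < 0 := by
  have hE0 : 0 < μP + η - βP := by linarith
  have hkey : (ρ*κ*Nhat + βP) * (βP - μP) < (μP + γ - βP) * (μP + η - βP) := by
    nlinarith [hstab]
  set δ := (μP + γ - βP) * (μP + η - βP) - (ρ*κ*Nhat + βP) * (βP - μP) with hδdef
  have hδ0 : 0 < δ := by linarith
  set ε := δ / (2*ρ*βP) with hεdef
  have hε0 : 0 < ε := by positivity
  set c1 := (κ*Nhat + βP/ρ + ε) / (μP + η - βP) with hc1def
  have hc10 : 0 < c1 := by positivity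
  have hc1E : c1 * (μP + η - βP) = κ*Nhat + βP/ρ + ε := by
    rw [hc1def]; field_simp
  refine ⟨c1, c1 + 1/ρ, hc10, by positivity, rfl, ?_, ?_⟩
  · have e1 : -c1 * (μP + η) - c1 * ρ * κ * Nhat + (c1 + 1/ρ) * ρ * κ * Nhat
        + (c1 + 1/ρ) * βP = -(c1 * (μP + η - βP)) + κ*Nhat + βP/ρ := by
      field_simp; ring
    rw [e1, hc1E]; linarith
  · have hρε : ρ * ε * βP = δ/2 := by
      rw [hεdef]; field_simp
    have hρεpos : 0 < ρ * ε := mul_pos hρ hε0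
    have hb : ρ * ε * (βP - μP) < δ/2 := by nlinarith [mul_pos hρεpos hμP]
    have key2 : (ρ*κ*Nhat + βP + ρ*ε) * (βP - μP) < (μP + γ - βP) * (μP + η - βP) := by
      nlinarith [hb, hδ0]
    have hρc1E : ρ * c1 * (μP + η - βP) = ρ*κ*Nhat + βP + ρ*ε := by
      rw [hc1def]; field_simp
    have key3 : ρ * c1 * (βP - μP) < μP + γ - βP := by
      rcases le_or_gt (βP - μP) 0 with h|h
      · nlinarith [mul_pos hρ hc10]
      · have hlt : ρ * c1 * (βP - μP) * (μP + η - βP)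
            < (μP + γ - βP) * (μP + η - βP) := by
          calc ρ * c1 * (βP - μP) * (μP + η - βP)
              = (ρ*κ*Nhat + βP + ρ*ε) * (βP - μP) := by rw [← hρc1E]; ring
            _ < _ := key2
        exact lt_of_mul_lt_mul_right hlt hE0.le
    have hgoal : ρ * (-(c1 + 1/ρ) * μP + c1 * γ - (c1 + 1/ρ) * γ + (c1 + 1/ρ) * βP)
        = ρ * c1 * (βP - μP) - (μP + γ - βP) := by
      field_simp; ring
    have hneg : ρ * (-(c1 + 1/ρ) * μP + c1 * γ - (c1 + 1/ρ) * γ + (c1 + 1/ρ) * βP) < 0 := by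
      rw [hgoal]; linarith
    exact neg_of_mul_neg_right hneg hρ.le
end

section
/- Let c₁, c₂ > 0 with c₂ = c₁ + 1/ρ, and define V(N, P_S, P_H) = (N - N̂) - N̂·ln(N/N̂) + c₁P_S + c₂P_H for N > 0, P_S, P_H ≥ 0, where N̂ = (β_N - μ_N)/δ. Along solutions of system (1.1), the derivative of V satisfies V̇ = -δ(N - N̂)² + P_S·[-c₁(μ_P+η) - c₁ρκN̂ + c₂ρκN̂ + c₂β_P] + P_H·[-c₂μ_P + c₁γ - c₂γ + c₂β_P]; in particular the cross terms in (N - N̂)P_S cancel. -/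
theorem lyapunov_derivative_identity (βN μN δ κ ρ γ βP μP η c1 c2 : ℝ)
    (hβN : 0 < βN) (hμN : 0 < μN) (hδ : 0 < δ) (hκ : 0 < κ) (hρ : 0 < ρ)
    (hγ : 0 < γ) (hβP : 0 < βP) (hμP : 0 < μP) (hη : 0 < η)
    (hN : μN < βN) (hc1 : 0 < c1) (hc2 : 0 < c2) (hc : c2 = c1 + 1 / ρ)
    (N PS PH : ℝ → ℝ) (t : ℝ) (hNpos : 0 < N t)
    (hdN : HasDerivAt N ((βN - μN) * N t - δ * N t ^ 2 - κ * N t * PS t) t)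
    (hdPS : HasDerivAt PS (-(μP + η) * PS t - ρ * κ * N t * PS t + γ * PH t) t)
    (hdPH : HasDerivAt PH (-μP * PH t + ρ * κ * N t * PS t - γ * PH t + βP * (PS t + PH t)) t) :
    HasDerivAt (fun s => (N s - (βN - μN) / δ) -
        ((βN - μN) / δ) * Real.log (N s / ((βN - μN) / δ)) + c1 * PS s + c2 * PH s)
      (-δ * (N t - (βN - μN) / δ) ^ 2 +
        PS t * (-c1 * (μP + η) - c1 * ρ * κ * ((βN - μN) / δ) + c2 * ρ * κ * ((βN - μN) / δ) + c2 * βP) +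
        PH t * (-c2 * μP + c1 * γ - c2 * γ + c2 * βP)) t := by
  set Nhat := (βN - μN) / δ with hNhat
  have hNhatpos : 0 < Nhat := div_pos (by linarith) hδ
  set N' := (βN - μN) * N t - δ * N t ^ 2 - κ * N t * PS t with hN'
  have hNne : N t ≠ 0 := ne_of_gt hNpos
  have hlog : HasDerivAt (fun s => Real.log (N s / Nhat)) (N' / N t) t := by
    have h1 : HasDerivAt (fun s => N s / Nhat) (N' / Nhat) t := hdN.div_const _
    have h2 := h1.log (by positivity)
    convert h2 using 1
    field_simp
  have hV : HasDerivAt (fun s => (N s - Nhat) - Nhat * Real.log (N s / Nhat)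
      + c1 * PS s + c2 * PH s)
      ((N' - Nhat * (N' / N t)) + c1 * (-(μP + η) * PS t - ρ * κ * N t * PS t + γ * PH t)
        + c2 * (-μP * PH t + ρ * κ * N t * PS t - γ * PH t + βP * (PS t + PH t))) t :=
    (((hdN.sub_const Nhat).sub (hlog.const_mul Nhat)).add (hdPS.const_mul c1)).add
      (hdPH.const_mul c2)
  convert hV using 1
  rw [hN', hc, hNhat]
  field_simp
  ring
end

section
/- Along any nonnegative solution of system (1.1) with N(t) ≤ N* for all t ≥ 0, the weighted quantity W(t) = ρ(P̃_H - P̃_S)N(t) + P̃_S P_S(t) + P̃_H P_H(t) satisfies the differential inequality W'(t) ≤ -min(μ_N, λ*)·W(t) + ρ(P̃_H - P̃_S)β_N N*, where (P̃_S, P̃_H) is the positive left eigenvector of M associated with eigenvalue -λ* and satisfying P̃_H > P̃_S > 0. Consequently, limsup_{t→∞} W(t) ≤ ρ(P̃_H - P̃_S)β_N N*/min(μ_N, λ*). -/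
private lemma decay_bound (m C : ℝ) (hm : 0 < m) (W D : ℝ → ℝ)
    (hW : ∀ t : ℝ, HasDerivAt W (D t) t)
    (hkey : ∀ t : ℝ, 0 ≤ t → D t ≤ -m * W t + C) :
    ∀ t : ℝ, 0 ≤ t → W t ≤ C / m + (W 0 - C / m) * Real.exp (-(m * t)) := by
  set g : ℝ → ℝ := fun t => Real.exp (m * t) * (W t - C / m) with hg_def
  have hg : ∀ t : ℝ, HasDerivAt g (Real.exp (m * t) * m * (W t - C / m)
      + Real.exp (m * t) * D t) t := by
    intro t
    have he : HasDerivAt (fun t : ℝ => Real.exp (m * t)) (Real.exp (m * t) * m) t := by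
      simpa [Function.comp_def] using (Real.hasDerivAt_exp (m * t)).comp t ((hasDerivAt_id t).const_mul m)
    exact he.mul ((hW t).sub_const (C / m))
  have hganti : AntitoneOn g (Set.Ici 0) := by
    apply antitoneOn_of_deriv_nonpos (convex_Ici 0)
    · exact fun t _ => ((hg t).continuousAt).continuousWithinAt
    · exact fun t _ => ((hg t).differentiableAt).differentiableWithinAt
    · intro t ht
      rw [interior_Ici] at ht
      rw [(hg t).deriv]
      have h := hkey t (le_of_lt ht)
      have hexp : 0 < Real.exp (m * t) := Real.exp_pos _
      have hmC : Real.exp (m * t) * (m * (C / m)) = Real.exp (m * t) * C := by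
        rw [mul_div_cancel₀ C hm.ne']
      have hDup : Real.exp (m * t) * D t ≤ Real.exp (m * t) * (-m * W t + C) :=
        mul_le_mul_of_nonneg_left h hexp.le
      have heq : Real.exp (m * t) * m * (W t - C / m) + Real.exp (m * t) * (-m * W t + C)
          = Real.exp (m * t) * C - Real.exp (m * t) * (m * (C / m)) := by ring
      linarith [hDup, heq, hmC]
  intro t ht
  have hgle : g t ≤ g 0 := hganti Set.self_mem_Ici (Set.mem_Ici.mpr ht) ht
  have hg0 : g 0 = W 0 - C / m := by simp [hg_def]
  rw [hg0] at hgle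
  have hexp : 0 < Real.exp (m * t) := Real.exp_pos _
  have h1 : W t - C / m ≤ (W 0 - C / m) * Real.exp (-(m * t)) := by
    rw [Real.exp_neg]
    calc W t - C / m = Real.exp (m * t) * (W t - C / m) * (Real.exp (m * t))⁻¹ := by
          rw [mul_comm (Real.exp (m * t)) (W t - C / m),
            mul_inv_cancel_right₀ hexp.ne']
      _ ≤ (W 0 - C / m) * (Real.exp (m * t))⁻¹ :=
          mul_le_mul_of_nonneg_right hgle (by positivity)
  linarith

private lemma limsup_decay (m C : ℝ) (hm : 0 < m) (W : ℝ → ℝ)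
    (hle : ∀ t : ℝ, 0 ≤ t → W t ≤ C / m + (W 0 - C / m) * Real.exp (-(m * t)))
    (hpos : ∀ t : ℝ, 0 ≤ t → 0 ≤ W t) :
    Filter.limsup W Filter.atTop ≤ C / m := by
  have htend : Filter.Tendsto (fun t : ℝ => C / m + (W 0 - C / m) * Real.exp (-(m * t)))
      Filter.atTop (nhds (C / m)) := by
    have h1 : Filter.Tendsto (fun t : ℝ => -(m * t)) Filter.atTop Filter.atBot := by
      exact Filter.tendsto_neg_atTop_atBot.comp (Filter.tendsto_id.const_mul_atTop hm)
    have h2 := Real.tendsto_exp_atBot.comp h1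
    have h3 : Filter.Tendsto (fun t : ℝ => (W 0 - C / m) * Real.exp (-(m * t)))
        Filter.atTop (nhds 0) := by
      simpa using h2.const_mul (W 0 - C / m)
    simpa using (tendsto_const_nhds (x := C / m)).add h3
  have hEv : W ≤ᶠ[Filter.atTop] fun t => C / m + (W 0 - C / m) * Real.exp (-(m * t)) := by
    filter_upwards [Filter.eventually_ge_atTop 0] with t ht
    exact hle t ht
  have hcb : Filter.IsCoboundedUnder (· ≤ ·) Filter.atTop W := by
    apply Filter.isCoboundedUnder_le_of_eventually_le Filter.atTop (x := 0)
    filter_upwards [Filter.eventually_ge_atTop 0] with t ht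
    exact hpos t ht
  calc Filter.limsup W Filter.atTop
      ≤ Filter.limsup (fun t => C / m + (W 0 - C / m) * Real.exp (-(m * t)))
        Filter.atTop := Filter.limsup_le_limsup hEv hcb htend.isBoundedUnder_le
    _ = C / m := htend.limsup_eq

theorem dissipativity_inequality (βN μN δ κ ρ γ βP μP η lamStar PtS PtH Nstar : ℝ)
    (hβN : 0 < βN) (hμN : 0 < μN) (hδ : 0 < δ) (hκ : 0 < κ) (hρ : 0 < ρ)
    (hγ : 0 < γ) (hβP : 0 < βP) (hμP : 0 < μP) (hη : 0 < η)
    (hN : μN < βN) (hP : μP < βP) (hPη : βP < μP + η)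
    (hext : (βP - μP - γ) * (μP + η) + βP * γ < 0)
    (hlam : 0 < lamStar) (hPtS : 0 < PtS) (hPtSH : PtS < PtH)
    (heig1 : PtS * (-(μP + η)) + PtH * βP = -lamStar * PtS)
    (heig2 : PtS * γ + PtH * (βP - μP - γ) = -lamStar * PtH)
    (N PS PH : ℝ → ℝ)
    (hnonneg : ∀ t : ℝ, 0 ≤ t → 0 ≤ N t ∧ 0 ≤ PS t ∧ 0 ≤ PH t)
    (hbound : ∀ t : ℝ, 0 ≤ t → N t ≤ Nstar)
    (hdN : ∀ t : ℝ, HasDerivAt N ((βN - μN) * N t - δ * N t ^ 2 - κ * N t * PS t) t)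
    (hdPS : ∀ t : ℝ, HasDerivAt PS (-(μP + η) * PS t - ρ * κ * N t * PS t + γ * PH t) t)
    (hdPH : ∀ t : ℝ, HasDerivAt PH
      (-μP * PH t + ρ * κ * N t * PS t - γ * PH t + βP * (PS t + PH t)) t) :
    (∀ t : ℝ, 0 ≤ t →
      deriv (fun s => ρ * (PtH - PtS) * N s + PtS * PS s + PtH * PH s) t ≤
        -(min μN lamStar) * (ρ * (PtH - PtS) * N t + PtS * PS t + PtH * PH t) +
          ρ * (PtH - PtS) * βN * Nstar) ∧
    Filter.limsup (fun t => ρ * (PtH - PtS) * N t + PtS * PS t + PtH * PH t) Filter.atTop ≤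
      ρ * (PtH - PtS) * βN * Nstar / min μN lamStar := by
  have hm : 0 < min μN lamStar := lt_min hμN hlam
  have hW : ∀ t : ℝ, HasDerivAt (fun s => ρ * (PtH - PtS) * N s + PtS * PS s + PtH * PH s)
      (ρ * (PtH - PtS) * ((βN - μN) * N t - δ * N t ^ 2 - κ * N t * PS t)
        + PtS * (-(μP + η) * PS t - ρ * κ * N t * PS t + γ * PH t)
        + PtH * (-μP * PH t + ρ * κ * N t * PS t - γ * PH t + βP * (PS t + PH t))) t := by
    intro t
    exact (((hdN t).const_mul (ρ * (PtH - PtS))).add ((hdPS t).const_mul PtS)).add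
      ((hdPH t).const_mul PtH)
  have hkey : ∀ t : ℝ, 0 ≤ t →
      ρ * (PtH - PtS) * ((βN - μN) * N t - δ * N t ^ 2 - κ * N t * PS t)
        + PtS * (-(μP + η) * PS t - ρ * κ * N t * PS t + γ * PH t)
        + PtH * (-μP * PH t + ρ * κ * N t * PS t - γ * PH t + βP * (PS t + PH t)) ≤
      -(min μN lamStar) * (ρ * (PtH - PtS) * N t + PtS * PS t + PtH * PH t) +
        ρ * (PtH - PtS) * βN * Nstar := by
    intro t ht
    obtain ⟨hN0, hPS0, hPH0⟩ := hnonneg t ht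
    have hNb := hbound t ht
    have hA : 0 ≤ ρ * (PtH - PtS) := mul_nonneg hρ.le (by linarith)
    have hm1 : min μN lamStar ≤ μN := min_le_left _ _
    have hm2 : min μN lamStar ≤ lamStar := min_le_right _ _
    have hE1 : (PtS * (-(μP + η)) + PtH * βP) * PS t = -lamStar * PtS * PS t := by
      rw [heig1]
    have hE2 : (PtS * γ + PtH * (βP - μP - γ)) * PH t = -lamStar * PtH * PH t := by
      rw [heig2]
    have p1 : 0 ≤ ρ * (PtH - PtS) * ((μN - min μN lamStar) * N t) :=
      mul_nonneg hA (mul_nonneg (by linarith) hN0)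
    have p3 : 0 ≤ ρ * (PtH - PtS) * (βN * (Nstar - N t)) :=
      mul_nonneg hA (mul_nonneg hβN.le (by linarith))
    have p4 : 0 ≤ ρ * (PtH - PtS) * (δ * N t ^ 2) := mul_nonneg hA (by positivity)
    have p2 : 0 ≤ (lamStar - min μN lamStar) * (PtS * PS t + PtH * PH t) :=
      mul_nonneg (by linarith)
        (add_nonneg (mul_nonneg hPtS.le hPS0) (mul_nonneg (hPtS.trans hPtSH).le hPH0))
    nlinarith [p1, p2, p3, p4, hE1, hE2]
  have hderiv : ∀ t : ℝ, 0 ≤ t →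
      deriv (fun s => ρ * (PtH - PtS) * N s + PtS * PS s + PtH * PH s) t ≤
        -(min μN lamStar) * (ρ * (PtH - PtS) * N t + PtS * PS t + PtH * PH t) +
          ρ * (PtH - PtS) * βN * Nstar := by
    intro t ht
    rw [(hW t).deriv]
    exact hkey t ht
  refine ⟨hderiv, ?_⟩
  have hle := decay_bound (min μN lamStar) (ρ * (PtH - PtS) * βN * Nstar) hm
    (fun s => ρ * (PtH - PtS) * N s + PtS * PS s + PtH * PH s) _ hW hkey
  apply limsup_decay (min μN lamStar) (ρ * (PtH - PtS) * βN * Nstar) hm _ hle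
  intro t ht
  obtain ⟨h1, h2, h3⟩ := hnonneg t ht
  have hA : 0 ≤ ρ * (PtH - PtS) := mul_nonneg hρ.le (by linarith)
  have := mul_nonneg hA h1
  have := mul_nonneg hPtS.le h2
  have := mul_nonneg (hPtS.trans hPtSH).le h3
  linarith
end

section
/- Suppose the interior equilibrium E* exists (i.e., (β_N-μ_N)(β_P-μ_P)κρ + δ(β_P-μ_P)(μ_P+η) > -δγ(β_P-μ_P-η)). The coefficient p₃ of the characteristic polynomial λ³ + p₁λ² + p₂λ + p₃ of the Jacobian at E* equals [(β_P-μ_P-γ)(μ_P+η) + γβ_P]·[-δ(β_P-μ_P-γ)(μ_P+η) - γδβ_P - κρ(β_P-μ_P)(β_N-μ_N)]/(κρ(β_P-μ_P)), and under the standing assumptions p₃ > 0. -/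
set_option maxHeartbeats 1000000 in

theorem p3_formula_and_positive (βN μN δ κ ρ γ βP μP η Nstar PSstar PHstar : ℝ)
    (hβN : 0 < βN) (hμN : 0 < μN) (hδ : 0 < δ) (hκ : 0 < κ) (hρ : 0 < ρ)
    (hγ : 0 < γ) (hβP : 0 < βP) (hμP : 0 < μP) (hη : 0 < η)
    (hN : μN < βN) (hP : μP < βP) (hPη : βP < μP + η)
    (hext : (βP - μP - γ) * (μP + η) + βP * γ < 0)
    (hexist : (βN - μN) * (βP - μP) * κ * ρ + δ * (βP - μP) * (μP + η) >
      -(δ * γ * (βP - μP - η)))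
    (hNstar : Nstar = (-((βP - μP) * (μP + η)) - γ * (βP - μP - η)) / ((βP - μP) * κ * ρ))
    (hPSstar : PSstar = ((βN - μN) - δ * Nstar) / κ)
    (hPHstar : PHstar = ((μP + η - βP) / (βP - μP)) * PSstar) :
    let J : Matrix (Fin 3) (Fin 3) ℝ :=
      !![βN - μN - 2 * δ * Nstar - κ * PSstar, -(Nstar * κ), 0;
         -(PSstar * ρ * κ), -(μP + η + ρ * κ * Nstar), γ;
         PSstar * ρ * κ, ρ * κ * Nstar + βP, βP - μP - γ]
    let p3 := ((βP - μP - γ) * (μP + η) + γ * βP) *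
      (-(δ * (βP - μP - γ) * (μP + η)) - γ * δ * βP - κ * ρ * (βP - μP) * (βN - μN)) /
      (κ * ρ * (βP - μP))
    (Matrix.charpoly J).coeff 0 = p3 ∧ 0 < p3 := by
  intro J p3
  have hPpos : 0 < βP - μP := sub_pos.mpr hP
  have hPne : βP - μP ≠ 0 := ne_of_gt hPpos
  have hκne : κ ≠ 0 := ne_of_gt hκ
  have hρne : ρ ≠ 0 := ne_of_gt hρ
  have hdet : (Matrix.charpoly J).coeff 0 = -J.det := by
    have := Matrix.det_eq_sign_charpoly_coeff J
    simp at this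
    linarith [this]
  constructor
  · rw [hdet]
    show -J.det = _
    have hd : J.det = _ := Matrix.det_fin_three J
    rw [hd]
    simp only [J, Matrix.cons_val', Matrix.cons_val_zero, Matrix.empty_val',
      Matrix.cons_val_fin_one, Matrix.cons_val_one, Matrix.head_cons, Matrix.head_fin_const,
      Matrix.cons_val_two, Matrix.tail_cons, Matrix.of_apply]
    have hNe : (βP - μP) * κ * ρ * Nstar =
        -((βP - μP) * (μP + η)) - γ * (βP - μP - η) := by
      rw [hNstar]; field_simp
    have hPSe : κ * PSstar = (βN - μN) - δ * Nstar := by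
      rw [hPSstar]; field_simp
    show _ = ((βP - μP - γ) * (μP + η) + γ * βP) *
      (-(δ * (βP - μP - γ) * (μP + η)) - γ * δ * βP - κ * ρ * (βP - μP) * (βN - μN)) /
      (κ * ρ * (βP - μP))
    rw [eq_div_iff (by positivity : κ * ρ * (βP - μP) ≠ 0)]
    linear_combination
      (κ * ρ * (βP - μP) * ((βN - μN) - 2 * δ * Nstar) +
        δ * ((βP - μP - γ) * (μP + η) + γ * βP)) * hNe -
      (κ * ρ * (βP - μP) * ((βP - μP - γ) * (μP + η) + γ * βP)) * hPSe
  · have hA : (βP - μP - γ) * (μP + η) + γ * βP < 0 := by linarith [hext]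
    have hB : -(δ * (βP - μP - γ) * (μP + η)) - γ * δ * βP - κ * ρ * (βP - μP) * (βN - μN) < 0 := by
      nlinarith [hexist]
    exact div_pos (mul_pos_of_neg_of_neg hA hB) (by positivity)
end
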